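/- Let T : ℝ → ℝ be defined by T(x) = x/(1-x) if x ≤ 1/2 and T(x) = (2x-1)/x if x > 1/2. For every natural number b ≥ 1, let φ_b = (√(b²+4) - b)/2 be the fractional part of the b-th metallic ratio (the positive root of x² + b·x - 1 = 0). Then φ_b is a periodic point of T of exact period 2b: T^[2b](φ_b) = φ_b, and T^[j](φ_b) ≠ φ_b for every j with 0 < j < 2b. In particular T admits periodic orbits of arbitrarily large period. -/

import Mathlib

noncomputable def T : ℝ → ℝ := fun x => if x ≤ 1/2 then x / (1 - x) else (2*x - 1) / x

lemma stepL (φ c : ℝ) (hφ : 0 < φ) (hc : 2 ≤ c) :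
    T (1/(c+φ)) = 1/(c-1+φ) := by
  have h1 : (0:ℝ) < c + φ := by linarith
  have h3 : (0:ℝ) < c - 1 + φ := by linarith
  have h2 : 1/(c+φ) ≤ 1/2 := by
    rw [div_le_div_iff₀ h1 (by norm_num)]; linarith
  show (if _ then _ else _) = _
  rw [if_pos h2]
  have h4 : 1 - 1/(c+φ) = (c-1+φ)/(c+φ) := by field_simp; ring
  rw [h4, div_div_div_eq, one_mul, div_eq_div_iff (by positivity : ((c+φ)*(c-1+φ) : ℝ) ≠ 0) (ne_of_gt h3)]
  ring

lemma stepTurn (φ : ℝ) (hφ : 0 < φ) (hφ1 : φ < 1) :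
    T (1/(1+φ)) = 1 - φ := by
  have h1 : (0:ℝ) < 1 + φ := by linarith
  have h2 : ¬ (1/(1+φ) ≤ 1/2) := by
    rw [not_le, div_lt_div_iff₀ (by norm_num) h1]; linarith
  show (if _ then _ else _) = _
  rw [if_neg h2]
  field_simp
  ring

lemma stepR (φ c : ℝ) (hφ : 0 < φ) (hc : 2 ≤ c) :
    T (1 - 1/(c+φ)) = 1 - 1/(c-1+φ) := by
  have h1 : (0:ℝ) < c + φ := by linarith
  have h3 : (0:ℝ) < c - 1 + φ := by linarith
  have h2 : ¬ (1 - 1/(c+φ) ≤ 1/2) := by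
    rw [not_le]
    have : 1/(c+φ) < 1/2 := by
      rw [div_lt_div_iff₀ h1 (by norm_num)]; linarith
    linarith
  show (if _ then _ else _) = _
  rw [if_neg h2]
  have hx : 1 - 1/(c+φ) = (c - 1 + φ)/(c+φ) := by field_simp; ring
  rw [hx]
  rw [div_eq_iff (by positivity), sub_mul, one_mul]
  field_simp
  ring

lemma stepClose (φ : ℝ) (hφ : 0 < φ) (hφ1 : φ < 1) :
    T (1 - 1/(1+φ)) = φ := by
  have h1 : (0:ℝ) < 1 + φ := by linarith
  have h2 : 1 - 1/(1+φ) ≤ 1/2 := by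
    have : 1/2 ≤ 1/(1+φ) := by
      rw [div_le_div_iff₀ (by norm_num) h1]; linarith
    linarith
  show (if _ then _ else _) = _
  rw [if_pos h2]
  have hx : 1 - 1/(1+φ) = φ/(1+φ) := by field_simp; ring
  rw [hx]
  have hy : 1 - φ/(1+φ) = 1/(1+φ) := by field_simp; ring
  rw [hy]
  field_simp

theorem stmt7 (b : ℕ) (hb : 1 ≤ b) :
    T^[2 * b] ((Real.sqrt ((b : ℝ)^2 + 4) - b) / 2) = (Real.sqrt ((b : ℝ)^2 + 4) - b) / 2 ∧
    ∀ j : ℕ, 0 < j → j < 2 * b →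
      T^[j] ((Real.sqrt ((b : ℝ)^2 + 4) - b) / 2) ≠ (Real.sqrt ((b : ℝ)^2 + 4) - b) / 2 := by
  set φ : ℝ := (Real.sqrt ((b : ℝ)^2 + 4) - b) / 2 with hφdef
  have hb' : (1:ℝ) ≤ b := by exact_mod_cast hb
  have hsq : Real.sqrt ((b : ℝ)^2 + 4) ^ 2 = (b : ℝ)^2 + 4 :=
    Real.sq_sqrt (by positivity)
  have hsb : (b : ℝ) < Real.sqrt ((b : ℝ)^2 + 4) := by
    have h0 : (0:ℝ) ≤ Real.sqrt ((b : ℝ)^2 + 4) := Real.sqrt_nonneg _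
    nlinarith
  have hφpos : 0 < φ := by rw [hφdef]; linarith
  have hquad : φ^2 + b * φ = 1 := by
    rw [hφdef]; nlinarith
  have hφ1 : φ < 1 := by nlinarith
  obtain ⟨k, rfl⟩ : ∃ k, b = k + 1 := ⟨b - 1, by omega⟩
  have hck : ((k + 1 : ℕ) : ℝ) = (k:ℝ) + 1 := by push_cast; ring
  rw [hck] at hquad
  -- phase 1
  have phase1 : ∀ j : ℕ, j ≤ k → T^[j] φ = 1/((k:ℝ) + 1 - j + φ) := by
    intro j
    induction j with
    | zero =>
      intro _
      simp only [Function.iterate_zero, id_eq, Nat.cast_zero, sub_zero]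
      rw [eq_div_iff (by positivity)]
      nlinarith
    | succ j ih =>
      intro hj
      have hj' : j ≤ k := by omega
      rw [Function.iterate_succ_apply', ih hj']
      have hc : (2:ℝ) ≤ (k:ℝ) + 1 - j := by
        have : (j:ℝ) + 1 ≤ (k:ℝ) := by exact_mod_cast (by omega : j + 1 ≤ k)
        linarith
      rw [stepL φ ((k:ℝ) + 1 - j) hφpos hc]
      congr 1
      push_cast
      ring
  -- phase 2
  have phase2 : ∀ j : ℕ, j ≤ k → T^[k + 1 + j] φ = 1 - 1/((k:ℝ) + 1 - j + φ) := by
    intro j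
    induction j with
    | zero =>
      intro _
      rw [Function.iterate_succ_apply', phase1 k le_rfl]
      have h1 : (k:ℝ) + 1 - k + φ = 1 + φ := by ring
      rw [h1, stepTurn φ hφpos hφ1]
      have h2 : φ = 1/((k:ℝ) + 1 + φ) := by
        rw [eq_div_iff (by positivity)]; nlinarith
      push_cast
      rw [sub_zero]
      linarith [h2]
    | succ j ih =>
      intro hj
      have hj' : j ≤ k := by omega
      have hidx : k + 1 + (j + 1) = (k + 1 + j) + 1 := by omega
      rw [hidx, Function.iterate_succ_apply', ih hj']
      have hc : (2:ℝ) ≤ (k:ℝ) + 1 - j := by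
        have : (j:ℝ) + 1 ≤ (k:ℝ) := by exact_mod_cast (by omega : j + 1 ≤ k)
        linarith
      rw [stepR φ ((k:ℝ) + 1 - j) hφpos hc]
      congr 2
      push_cast
      ring
  constructor
  · have hidx : 2 * (k + 1) = (k + 1 + k) + 1 := by omega
    rw [hidx, Function.iterate_succ_apply', phase2 k le_rfl]
    have h1 : (k:ℝ) + 1 - k + φ = 1 + φ := by ring
    rw [h1, stepClose φ hφpos hφ1]
  · intro j hj0 hj2 heq
    rcases le_or_gt j k with hjk | hjk
    · rw [phase1 j hjk] at heq
      have hd : (0:ℝ) < (k:ℝ) + 1 - j + φ := by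
        have : (j:ℝ) ≤ (k:ℝ) := by exact_mod_cast hjk
        linarith
      rw [div_eq_iff (by positivity)] at heq
      have hj1 : (1:ℝ) ≤ j := by exact_mod_cast hj0
      nlinarith
    · -- j = k + 1 + i with i ≤ k
      obtain ⟨i, rfl⟩ : ∃ i, j = k + 1 + i := ⟨j - (k+1), by omega⟩
      have hik : i ≤ k := by omega
      rw [phase2 i hik] at heq
      set m : ℝ := (k:ℝ) + 1 - i with hm
      have hm1 : (1:ℝ) ≤ m := by
        have : (i:ℝ) ≤ (k:ℝ) := by exact_mod_cast hik
        rw [hm]; linarith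
      have hd : (0:ℝ) < m + φ := by linarith
      have heq2 : (1 - φ) * (m + φ) = 1 := by
        have h3 : 1/(m + φ) = 1 - φ := by linarith
        rw [div_eq_iff (by positivity)] at h3
        linarith [h3]
      rcases eq_or_lt_of_le hik with hik' | hik'
      · -- i = k, m = 1 : get φ² = 0
        have hm1' : m = 1 := by
          rw [hm]
          have : (i:ℝ) = (k:ℝ) := by exact_mod_cast hik'
          linarith
        rw [hm1'] at heq2
        nlinarith
      · -- i < k, m ≥ 2
        have hm2 : (2:ℝ) ≤ m := by
          have : (i:ℝ) + 1 ≤ (k:ℝ) := by exact_mod_cast (by omega : i + 1 ≤ k)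
          rw [hm]; linarith
        have hmk : m ≤ (k:ℝ) + 1 := by
          have : (0:ℝ) ≤ (i:ℝ) := by positivity
          rw [hm]; linarith
        nlinarith [mul_pos hφpos (by linarith : (0:ℝ) < (k:ℝ) + 2 - m)]
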